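/- Let β, γ ∈ ℝ with β ≠ 0, let M be a 3×3 real matrix, and let T be an invertible 3×3 real matrix with T⁻¹ M T = J(β,γ). Let w, v ∈ ℝ³ satisfy wᵀM = γ wᵀ, M v = γ v, and wᵀv = 1. Then the outer product v wᵀ equals T E₃₃ T⁻¹, where E₃₃ is the 3×3 matrix whose only nonzero entry is a 1 in position (3,3). -/

import Mathlib

/-- If `T` conjugates `M` into the real Jordan form `J(β,γ)` and `w`, `v` are left and
right eigenvectors of `M` for the eigenvalue `γ` normalised by `wᵀv = 1`, then the
outer product `v wᵀ` equals `T E₃₃ T⁻¹`. -/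
theorem stmt_3 (β γ : ℝ) (hβ : β ≠ 0) (M T : Matrix (Fin 3) (Fin 3) ℝ)
    (hT : IsUnit T.det)
    (hconj : T⁻¹ * M * T = !![0, β, 0; -β, 0, 0; 0, 0, γ])
    (w v : Fin 3 → ℝ)
    (hw : Matrix.vecMul w M = γ • w)
    (hv : M.mulVec v = γ • v)
    (hwv : ∑ i, w i * v i = 1) :
    Matrix.vecMulVec v w = T * Matrix.single 2 2 (1 : ℝ) * T⁻¹ := by
  have hTT : T * T⁻¹ = 1 := Matrix.mul_nonsing_inv T hT
  set J := !![0, β, 0; -β, 0, 0; 0, 0, γ] with hJ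
  set v' := (T⁻¹).mulVec v with hv'def
  set w' := Matrix.vecMul w T with hw'def
  have hv' : J.mulVec v' = γ • v' := by
    rw [← hconj, hv'def, Matrix.mulVec_mulVec, Matrix.mul_assoc, hTT,
      Matrix.mul_one, ← Matrix.mulVec_mulVec, hv, Matrix.mulVec_smul]
  have hw' : Matrix.vecMul w' J = γ • w' := by
    rw [← hconj, hw'def, Matrix.vecMul_vecMul, ← Matrix.mul_assoc, ← Matrix.mul_assoc,
      hTT, Matrix.one_mul, ← Matrix.vecMul_vecMul, hw, Matrix.smul_vecMul]
  have e0 := congrFun hv' 0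
  have e1 := congrFun hv' 1
  have f0 := congrFun hw' 0
  have f1 := congrFun hw' 1
  simp [Matrix.mulVec, Matrix.vecMul, dotProduct, Fin.sum_univ_three, hJ,
    Matrix.vecHead, Matrix.vecTail] at e0 e1 f0 f1
  have hβ2 : β ^ 2 + γ ^ 2 > 0 := by positivity
  have hβ2' : β ^ 2 + γ ^ 2 ≠ 0 := ne_of_gt hβ2
  have hv1 : v' 1 = 0 := by
    have h : (β ^ 2 + γ ^ 2) * v' 1 = 0 := by linear_combination β * e0 - γ * e1
    exact (mul_eq_zero.mp h).resolve_left hβ2'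
  have hv0 : v' 0 = 0 := by
    have h : β * v' 0 = 0 := by linear_combination -e1 - γ * hv1
    exact (mul_eq_zero.mp h).resolve_left hβ
  have hw0 : w' 0 = 0 := by
    have h : (β ^ 2 + γ ^ 2) * w' 0 = 0 := by linear_combination β * f1 - γ * f0
    exact (mul_eq_zero.mp h).resolve_left hβ2'
  have hw1 : w' 1 = 0 := by
    have h : β * w' 1 = 0 := by linear_combination -f0 - γ * hw0
    exact (mul_eq_zero.mp h).resolve_left hβ
  have hvv : v = T.mulVec v' := by
    rw [hv'def, Matrix.mulVec_mulVec, hTT, Matrix.one_mulVec]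
  have hww : w = Matrix.vecMul w' T⁻¹ := by
    rw [hw'def, Matrix.vecMul_vecMul, hTT, Matrix.vecMul_one]
  have hnorm : w' 2 * v' 2 = 1 := by
    have h : dotProduct w' v' = dotProduct w v := by
      rw [hw'def, hv'def, ← Matrix.dotProduct_mulVec, Matrix.mulVec_mulVec, hTT,
        Matrix.one_mulVec]
    simp only [dotProduct] at h
    rw [hwv] at h
    simpa [Fin.sum_univ_three, hv0, hv1, hw0, hw1] using h
  ext i j
  rw [hvv, hww]
  simp [Matrix.vecMulVec, Matrix.mulVec, Matrix.vecMul, dotProduct,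
    Matrix.mul_apply, Matrix.single, Fin.sum_univ_three, hv0, hv1, hw0, hw1,
    Matrix.single]
  linear_combination (T i 2 * T⁻¹ 2 j) * hnorm
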